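/- For every g ≥ 2, the commutator subgroup of the genus-g surface group SurfaceGroup g is a free group. -/

import Mathlib

open scoped commutatorElement in
/-- The surface relator `∏ ⁅aᵢ,bᵢ⁆` in `FreeGroup (Fin (2*g))`. -/
def surfaceRelator (g : ℕ) : FreeGroup (Fin (2 * g)) :=
  ((List.finRange g).map fun i =>
    ⁅FreeGroup.of (⟨i.1, by omega⟩ : Fin (2 * g)),
     FreeGroup.of (⟨g + i.1, by omega⟩ : Fin (2 * g))⁆).prod

/-- The genus-`g` surface group. -/
def SurfaceGroup (g : ℕ) : Type :=
  PresentedGroup ({surfaceRelator g} : Set (FreeGroup (Fin (2 * g))))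

instance (g : ℕ) : Group (SurfaceGroup g) := by unfold SurfaceGroup; infer_instance

namespace SurfaceFree

open FreeGroup SemidirectProduct
open scoped commutatorElement

variable (k : ℕ)

/-- Indices of the generators other than `a₁` (index `0`) and `b₁` (index `g = k+2`). -/
abbrev Sk := {i : Fin (2 * (k + 2)) // i.1 ≠ 0 ∧ i.1 ≠ k + 2}

/-- The basis of the free kernel: one special generator (for `b₁`) plus a `ℤ`-indexed
family of copies of the other generators. -/
abbrev Bk := Unit ⊕ (Sk k × ℤ)

abbrev Nk := FreeGroup (Bk k)

def gen1 (i : Fin (k + 1)) : Sk k :=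
  ⟨⟨i.1 + 1, by have := i.isLt; omega⟩,
   by show i.1 + 1 ≠ 0; omega,
   by show i.1 + 1 ≠ k + 2; have := i.isLt; omega⟩
def gen2 (i : Fin (k + 1)) : Sk k :=
  ⟨⟨(k + 2) + (i.1 + 1), by have := i.isLt; omega⟩,
   by show (k + 2) + (i.1 + 1) ≠ 0; omega,
   by show (k + 2) + (i.1 + 1) ≠ k + 2; omega⟩

/-- The level-`n` product of commutators `∏_{i≥2} ⁅aᵢ,bᵢ⁆` in the free group `Nk`. -/
def V (n : ℤ) : Nk k :=
  ((List.finRange (k + 1)).map fun i =>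
    ⁅(FreeGroup.of (Sum.inr (gen1 k i, n)) : Nk k),
     (FreeGroup.of (Sum.inr (gen2 k i, n)) : Nk k)⁆).prod

lemma map_V {M : Type*} [Group M] (φ : Nk k →* M) (n : ℤ) :
    φ (V k n) = ((List.finRange (k + 1)).map fun i =>
      ⁅φ (FreeGroup.of (Sum.inr (gen1 k i, n))),
       φ (FreeGroup.of (Sum.inr (gen2 k i, n)))⁆).prod := by
  rw [V, map_list_prod, List.map_map]
  refine congrArg List.prod (List.map_congr_left fun i _ => ?_)
  simp [Function.comp, map_commutatorElement]

def shiftFun : Bk k → Nk k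
  | Sum.inl _ => (V k 0)⁻¹ * FreeGroup.of (Sum.inl ())
  | Sum.inr (s, n) => FreeGroup.of (Sum.inr (s, n + 1))

def unshiftFun : Bk k → Nk k
  | Sum.inl _ => V k (-1) * FreeGroup.of (Sum.inl ())
  | Sum.inr (s, n) => FreeGroup.of (Sum.inr (s, n - 1))

def shiftHom : Nk k →* Nk k := FreeGroup.lift (shiftFun k)
def unshiftHom : Nk k →* Nk k := FreeGroup.lift (unshiftFun k)

@[simp] lemma shiftHom_inr (s : Sk k) (n : ℤ) :
    shiftHom k (FreeGroup.of (Sum.inr (s, n))) = FreeGroup.of (Sum.inr (s, n + 1)) := by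
  simp [shiftHom, shiftFun]

@[simp] lemma unshiftHom_inr (s : Sk k) (n : ℤ) :
    unshiftHom k (FreeGroup.of (Sum.inr (s, n))) = FreeGroup.of (Sum.inr (s, n - 1)) := by
  simp [unshiftHom, unshiftFun]

lemma shiftHom_V (n : ℤ) : shiftHom k (V k n) = V k (n + 1) := by
  rw [map_V, V]; simp

lemma unshiftHom_V (n : ℤ) : unshiftHom k (V k n) = V k (n - 1) := by
  rw [map_V, V]; simp

lemma shiftHom_inl : shiftHom k (FreeGroup.of (Sum.inl ())) =
    (V k 0)⁻¹ * FreeGroup.of (Sum.inl ()) := by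
  simp [shiftHom, shiftFun]

lemma unshiftHom_inl : unshiftHom k (FreeGroup.of (Sum.inl ())) =
    V k (-1) * FreeGroup.of (Sum.inl ()) := by
  simp [unshiftHom, unshiftFun]

/-- The shift automorphism of `Nk`. -/
def shiftEquiv : MulAut (Nk k) :=
  MonoidHom.toMulEquiv (shiftHom k) (unshiftHom k)
    (by
      apply FreeGroup.ext_hom
      rintro (⟨⟩ | ⟨s, n⟩)
      · show unshiftHom k (shiftHom k (FreeGroup.of (Sum.inl ()))) = FreeGroup.of (Sum.inl ())
        rw [shiftHom_inl, _root_.map_mul, _root_.map_inv, unshiftHom_V, unshiftHom_inl, zero_sub]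
        group
      · simp)
    (by
      apply FreeGroup.ext_hom
      rintro (⟨⟩ | ⟨s, n⟩)
      · show shiftHom k (unshiftHom k (FreeGroup.of (Sum.inl ()))) = FreeGroup.of (Sum.inl ())
        rw [unshiftHom_inl, _root_.map_mul, shiftHom_V, shiftHom_inl]
        norm_num
      · simp)

lemma shiftEquiv_apply (x : Nk k) : shiftEquiv k x = shiftHom k x := rfl
lemma shiftEquiv_symm_apply (x : Nk k) : (shiftEquiv k)⁻¹ x = unshiftHom k x := rfl

/-- The `ℤ`-action on `Nk` by powers of the shift. -/
def θ : Multiplicative ℤ →* MulAut (Nk k) := zpowersHom _ (shiftEquiv k)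

/-- The semidirect product `Nk ⋊ ℤ`, which will be shown isomorphic to the surface group. -/
abbrev Hk := Nk k ⋊[θ k] Multiplicative ℤ

lemma shiftEquiv_zpow_inr (n : ℤ) : ∀ (m : ℤ) (s : Sk k),
    (shiftEquiv k ^ n) (FreeGroup.of (Sum.inr (s, m))) = FreeGroup.of (Sum.inr (s, m + n)) := by
  induction n using Int.induction_on with
  | zero => intro m s; simp
  | succ i ih =>
      intro m s
      rw [zpow_add_one, MulAut.mul_apply, shiftEquiv_apply, shiftHom_inr, ih]
      congr 2
      ring
  | pred i ih =>
      intro m s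
      rw [zpow_sub_one, MulAut.mul_apply, shiftEquiv_symm_apply, unshiftHom_inr, ih]
      congr 2
      ring

/-- Generic computation of a lifted map on the surface relator, splitting off the first
commutator. -/
lemma lift_relator {M : Type*} [Group M] (f : Fin (2 * (k + 2)) → M) :
    FreeGroup.lift f (surfaceRelator (k + 2)) =
      ⁅f ⟨0, by omega⟩, f ⟨k + 2, by omega⟩⁆ *
      ((List.finRange (k + 1)).map fun i =>
        ⁅f ⟨i.1 + 1, by have := i.isLt; omega⟩,
         f ⟨(k + 2) + (i.1 + 1), by have := i.isLt; omega⟩⁆).prod := by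
  rw [surfaceRelator, map_list_prod, List.map_map, List.finRange_succ, List.map_cons,
    List.prod_cons, List.map_map]
  congr 1
  · simp [Function.comp, map_commutatorElement]
  · refine congrArg List.prod (List.map_congr_left fun i _ => ?_)
    simp [Function.comp, map_commutatorElement]

/-- The group presentation of the genus-`k+2` surface group. -/
abbrev rels : Set (FreeGroup (Fin (2 * (k + 2)))) := {surfaceRelator (k + 2)}

abbrev Gk := PresentedGroup (rels k)

/-- The image of `a₁` in the surface group. -/
def aG : Gk k := PresentedGroup.of ⟨0, by omega⟩

/-- The image of `b₁` in the surface group. -/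
def bG : Gk k := PresentedGroup.of ⟨k + 2, by omega⟩

/-- Level-`n` conjugates of the generators. -/
def yG (s : Sk k) (n : ℤ) : Gk k := aG k ^ n * PresentedGroup.of s.1 * aG k ^ (-n)

/-- Level-`n` product of commutators in the surface group. -/
def WG (n : ℤ) : Gk k :=
  ((List.finRange (k + 1)).map fun i => ⁅yG k (gen1 k i) n, yG k (gen2 k i) n⁆).prod

lemma conj_yG (s : Sk k) (n : ℤ) : aG k * yG k s n * (aG k)⁻¹ = yG k s (n + 1) := by
  rw [yG, yG]
  group

lemma conj_WG (n : ℤ) : aG k * WG k n * (aG k)⁻¹ = WG k (n + 1) := by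
  have h : aG k * WG k n * (aG k)⁻¹ = (MulAut.conj (aG k)).toMonoidHom (WG k n) := rfl
  rw [h, WG, map_list_prod, List.map_map, WG]
  refine congrArg List.prod (List.map_congr_left fun i _ => ?_)
  simp only [Function.comp_apply, map_commutatorElement, MulEquiv.coe_toMonoidHom,
    MulAut.conj_apply, conj_yG]

/-- The defining relation, in split form. -/
lemma relation_G : ⁅aG k, bG k⁆ * WG k 0 = 1 := by
  have hmem : surfaceRelator (k + 2) ∈ Subgroup.normalClosure (rels k) :=
    Subgroup.subset_normalClosure (Set.mem_singleton _)
  have hmk : (PresentedGroup.mk (rels k)) (surfaceRelator (k + 2)) = 1 :=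
    (QuotientGroup.eq_one_iff _).2 hmem
  have heq : FreeGroup.lift (fun i => (PresentedGroup.of i : Gk k)) =
      PresentedGroup.mk (rels k) :=
    FreeGroup.ext_hom _ _ fun a => by simp [PresentedGroup.of]
  have h1 : FreeGroup.lift (fun i => (PresentedGroup.of i : Gk k)) (surfaceRelator (k + 2)) = 1 :=
    by rw [heq]; exact hmk
  rw [lift_relator] at h1
  have h2 : WG k 0 = ((List.finRange (k + 1)).map fun i =>
      ⁅(PresentedGroup.of (gen1 k i).1 : Gk k), (PresentedGroup.of (gen2 k i).1 : Gk k)⁆).prod := by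
    rw [WG]
    refine congrArg List.prod (List.map_congr_left fun i _ => ?_)
    simp [yG]
  rw [h2]
  exact h1

lemma conj_bG : aG k * bG k * (aG k)⁻¹ = (WG k 0)⁻¹ * bG k := by
  have h := relation_G k
  rw [commutatorElement_def] at h
  have h' : aG k * bG k * (aG k)⁻¹ * (bG k)⁻¹ = (WG k 0)⁻¹ :=
    mul_eq_one_iff_eq_inv.mp h
  rw [← h']; group

/-- The map on generators defining `Φ : Gk → Hk`. -/
def fgen (i : Fin (2 * (k + 2))) : Hk k :=
  if h0 : i.1 = 0 then inr (Multiplicative.ofAdd 1)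
  else if hg : i.1 = k + 2 then inl (FreeGroup.of (Sum.inl ()))
  else inl (FreeGroup.of (Sum.inr (⟨i, h0, hg⟩, 0)))

lemma fgen_zero : fgen k ⟨0, by omega⟩ = inr (Multiplicative.ofAdd 1) := by
  rw [fgen, dif_pos rfl]

lemma fgen_mid : fgen k ⟨k + 2, by omega⟩ = inl (FreeGroup.of (Sum.inl ())) := by
  rw [fgen, dif_neg (Nat.succ_ne_zero (k + 1)), dif_pos rfl]

lemma fgen_other (s : Sk k) : fgen k s.1 = inl (FreeGroup.of (Sum.inr (s, 0))) := by
  rw [fgen, dif_neg s.2.1, dif_neg s.2.2]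

lemma theta_z (x : Nk k) :
    (θ k (Multiplicative.ofAdd 1)) x = shiftHom k x := by
  rw [θ, zpowersHom_apply]
  norm_num
  rfl

/-- The relator maps to `1` in `Hk`. -/
lemma relator_maps_to_one :
    ∀ r ∈ rels k, FreeGroup.lift (fgen k) r = 1 := by
  intro r hr
  rcases hr with rfl
  rw [lift_relator]
  have h1 : (⁅fgen k ⟨0, by omega⟩, fgen k ⟨k + 2, by omega⟩⁆ : Hk k) = inl ((V k 0)⁻¹) := by
    rw [fgen_zero, fgen_mid, commutatorElement_def]
    have e1 : ((inr (Multiplicative.ofAdd 1) : Hk k))⁻¹ = inr (Multiplicative.ofAdd 1)⁻¹ :=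
      (_root_.map_inv (inr : Multiplicative ℤ →* Hk k) _).symm
    have e2 : ((inl (FreeGroup.of (Sum.inl ())) : Hk k))⁻¹ =
        inl (FreeGroup.of (Sum.inl ()))⁻¹ :=
      (_root_.map_inv (inl : Nk k →* Hk k) _).symm
    rw [e1, e2]
    rw [show (inr (Multiplicative.ofAdd 1) : Hk k) * inl (FreeGroup.of (Sum.inl ())) *
        inr (Multiplicative.ofAdd 1)⁻¹ * inl (FreeGroup.of (Sum.inl ()))⁻¹ =
        (inr (Multiplicative.ofAdd 1) * inl (FreeGroup.of (Sum.inl ())) *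
          inr (Multiplicative.ofAdd 1)⁻¹) * inl (FreeGroup.of (Sum.inl ()))⁻¹ from rfl]
    rw [← inl_aut, ← _root_.map_mul, theta_z, shiftHom_inl, mul_inv_cancel_right]
  have h2 : ((List.finRange (k + 1)).map fun i =>
      ⁅fgen k ⟨i.1 + 1, by have := i.isLt; omega⟩,
       fgen k ⟨(k + 2) + (i.1 + 1), by have := i.isLt; omega⟩⁆).prod
        = (inl (V k 0) : Hk k) := by
    rw [V, map_list_prod, List.map_map]
    refine congrArg List.prod (List.map_congr_left fun i _ => ?_)
    show _ = inl ⁅(FreeGroup.of (Sum.inr (gen1 k i, 0)) : Nk k),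
      (FreeGroup.of (Sum.inr (gen2 k i, 0)) : Nk k)⁆
    rw [map_commutatorElement]
    congr 1
    · exact fgen_other k (gen1 k i)
    · exact fgen_other k (gen2 k i)
  rw [h1, h2, ← _root_.map_mul, inv_mul_cancel, _root_.map_one]

/-- The homomorphism from the surface group to the semidirect product. -/
def Φ : Gk k →* Hk k := PresentedGroup.toGroup (relator_maps_to_one k)

/-- The map on the free-group factor for `Ψ : Hk → Gk`. -/
def nfun : Bk k → Gk k
  | Sum.inl _ => bG k
  | Sum.inr (s, n) => yG k s n

def f₁ : Nk k →* Gk k := FreeGroup.lift (nfun k)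

def f₂ : Multiplicative ℤ →* Gk k := zpowersHom _ (aG k)

@[simp] lemma f₁_inl : f₁ k (FreeGroup.of (Sum.inl ())) = bG k := by simp [f₁, nfun]

@[simp] lemma f₁_inr (s : Sk k) (n : ℤ) :
    f₁ k (FreeGroup.of (Sum.inr (s, n))) = yG k s n := by simp [f₁, nfun]

lemma f₁_V (n : ℤ) : f₁ k (V k n) = WG k n := by
  rw [map_V, WG]
  refine congrArg List.prod (List.map_congr_left fun i _ => ?_)
  simp

lemma step : ∀ x : Nk k, f₁ k (shiftEquiv k x) = aG k * f₁ k x * (aG k)⁻¹ := by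
  have h : (f₁ k).comp (shiftHom k) = (MulAut.conj (aG k)).toMonoidHom.comp (f₁ k) := by
    apply FreeGroup.ext_hom
    rintro (⟨⟩ | ⟨s, n⟩)
    · show f₁ k (shiftHom k (FreeGroup.of (Sum.inl ()))) = aG k * f₁ k (FreeGroup.of (Sum.inl ())) * (aG k)⁻¹
      rw [shiftHom_inl, _root_.map_mul, _root_.map_inv, f₁_V, f₁_inl, conj_bG]
    · show f₁ k (shiftHom k (FreeGroup.of (Sum.inr (s, n)))) = aG k * f₁ k (FreeGroup.of (Sum.inr (s, n))) * (aG k)⁻¹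
      rw [shiftHom_inr, f₁_inr, f₁_inr, conj_yG]
  intro x
  exact DFunLike.congr_fun h x

lemma inv_step : ∀ x : Nk k, f₁ k ((shiftEquiv k)⁻¹ x) = (aG k)⁻¹ * f₁ k x * aG k := by
  intro x
  have h := step k ((shiftEquiv k)⁻¹ x)
  rw [MulAut.apply_inv_self] at h
  rw [h]
  group

lemma compat_pt (n : ℤ) : ∀ x : Nk k,
    f₁ k ((shiftEquiv k ^ n) x) = aG k ^ n * f₁ k x * aG k ^ (-n) := by
  induction n using Int.induction_on with
  | zero => intro x; simp
  | succ i ih =>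
      intro x
      rw [zpow_add_one, MulAut.mul_apply, ih, step]
      group
  | pred i ih =>
      intro x
      rw [zpow_sub_one, MulAut.mul_apply, ih, inv_step]
      group

lemma compat : ∀ m : Multiplicative ℤ,
    (f₁ k).comp ((θ k m).toMonoidHom) = (MulAut.conj (f₂ k m)).toMonoidHom.comp (f₁ k) := by
  intro m
  apply MonoidHom.ext
  intro x
  simp only [MonoidHom.comp_apply, MulEquiv.coe_toMonoidHom, MulAut.conj_apply]
  have h1 : θ k m = shiftEquiv k ^ m.toAdd := rfl
  have h2 : f₂ k m = aG k ^ m.toAdd := rfl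
  rw [h1, compat_pt, h2, zpow_neg]

/-- The homomorphism from the semidirect product to the surface group. -/
def Ψ : Hk k →* Gk k := SemidirectProduct.lift (f₁ k) (f₂ k) (compat k)

lemma Psi_comp_Phi : (Ψ k).comp (Φ k) = MonoidHom.id (Gk k) := by
  apply PresentedGroup.ext
  intro x
  simp only [MonoidHom.comp_apply, MonoidHom.id_apply]
  rw [show (Φ k) (PresentedGroup.of x) = fgen k x from PresentedGroup.toGroup.of _]
  by_cases h0 : x.1 = 0
  · rw [show x = ⟨0, by omega⟩ from Fin.ext h0, fgen_zero]
    rw [show (Ψ k) (inr (Multiplicative.ofAdd 1)) = f₂ k (Multiplicative.ofAdd 1) from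
      SemidirectProduct.lift_inr _ _ _ _]
    show aG k ^ (1 : ℤ) = _
    rw [zpow_one]
    rfl
  · by_cases hg : x.1 = k + 2
    · rw [show x = ⟨k + 2, by omega⟩ from Fin.ext hg, fgen_mid]
      rw [show (Ψ k) (inl (FreeGroup.of (Sum.inl ()))) = f₁ k (FreeGroup.of (Sum.inl ())) from
        SemidirectProduct.lift_inl _ _ _ _]
      rw [f₁_inl]
      rfl
    · rw [show fgen k x = inl (FreeGroup.of (Sum.inr ((⟨x, h0, hg⟩ : Sk k), 0))) from
        fgen_other k ⟨x, h0, hg⟩]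
      rw [show (Ψ k) (inl (FreeGroup.of (Sum.inr ((⟨x, h0, hg⟩ : Sk k), 0)))) =
        f₁ k (FreeGroup.of (Sum.inr ((⟨x, h0, hg⟩ : Sk k), 0))) from
        SemidirectProduct.lift_inl _ _ _ _]
      rw [f₁_inr]
      simp [yG]

lemma Phi_comp_Psi : (Φ k).comp (Ψ k) = MonoidHom.id (Hk k) := by
  apply SemidirectProduct.hom_ext
  · apply FreeGroup.ext_hom
    rintro (⟨⟩ | ⟨s, n⟩)
    · show (Φ k) ((Ψ k) (inl (FreeGroup.of (Sum.inl ())))) = inl (FreeGroup.of (Sum.inl ()))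
      rw [show (Ψ k) (inl (FreeGroup.of (Sum.inl ()))) = f₁ k (FreeGroup.of (Sum.inl ())) from
        SemidirectProduct.lift_inl _ _ _ _, f₁_inl]
      rw [show (Φ k) (bG k) = fgen k ⟨k + 2, by omega⟩ from PresentedGroup.toGroup.of _, fgen_mid]
    · show (Φ k) ((Ψ k) (inl (FreeGroup.of (Sum.inr (s, n))))) = inl (FreeGroup.of (Sum.inr (s, n)))
      rw [show (Ψ k) (inl (FreeGroup.of (Sum.inr (s, n)))) =
        f₁ k (FreeGroup.of (Sum.inr (s, n))) from SemidirectProduct.lift_inl _ _ _ _, f₁_inr, yG]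
      rw [_root_.map_mul, _root_.map_mul, map_zpow, map_zpow]
      rw [show (Φ k) (aG k) = fgen k ⟨0, by omega⟩ from PresentedGroup.toGroup.of _, fgen_zero]
      rw [show (Φ k) (PresentedGroup.of s.1) = fgen k s.1 from PresentedGroup.toGroup.of _,
        fgen_other]
      rw [← _root_.map_zpow (inr : Multiplicative ℤ →* Hk k),
        ← _root_.map_zpow (inr : Multiplicative ℤ →* Hk k), zpow_neg]
      rw [show (inr ((Multiplicative.ofAdd 1) ^ n) : Hk k) *
            inl (FreeGroup.of (Sum.inr (s, 0))) * inr ((Multiplicative.ofAdd 1) ^ n)⁻¹ =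
          inl (θ k ((Multiplicative.ofAdd 1) ^ n) (FreeGroup.of (Sum.inr (s, 0)))) from
        (inl_aut _ _).symm]
      have h1 : θ k ((Multiplicative.ofAdd 1) ^ n) = shiftEquiv k ^ n := by
        rw [θ, zpowersHom_apply, toAdd_zpow]
        norm_num
      rw [h1, shiftEquiv_zpow_inr, zero_add]
  · apply MonoidHom.ext_mint
    show (Φ k) ((Ψ k) (inr (Multiplicative.ofAdd 1))) = inr (Multiplicative.ofAdd 1)
    rw [show (Ψ k) (inr (Multiplicative.ofAdd 1)) = f₂ k (Multiplicative.ofAdd 1) from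
      SemidirectProduct.lift_inr _ _ _ _]
    show (Φ k) (aG k ^ (1 : ℤ)) = _
    rw [zpow_one]
    rw [show (Φ k) (aG k) = fgen k ⟨0, by omega⟩ from PresentedGroup.toGroup.of _, fgen_zero]

/-- The surface group of genus `k+2` is isomorphic to `Nk ⋊ ℤ`. -/
def surfaceEquiv : Gk k ≃* Hk k :=
  MonoidHom.toMulEquiv (Φ k) (Ψ k) (Psi_comp_Phi k) (Phi_comp_Psi k)

theorem main : IsFreeGroup (commutator (Gk k)) := by
  set e := surfaceEquiv k
  have hmap : (commutator (Gk k)).map (e : Gk k →* Hk k) = commutator (Hk k) := by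
    have hsurj : Function.Surjective ((e : Gk k →* Hk k) : Gk k → Hk k) := e.surjective
    rw [commutator_def, commutator_def, Subgroup.map_commutator,
      Subgroup.map_top_of_surjective _ hsurj]
  have hle : commutator (Hk k) ≤ (inl : Nk k →* Hk k).range := by
    rw [range_inl_eq_ker_rightHom]
    exact Abelianization.commutator_subset_ker _
  set P : Subgroup (Nk k) := (commutator (Hk k)).comap (inl : Nk k →* Hk k) with hP
  have hPmap : P.map (inl : Nk k →* Hk k) = commutator (Hk k) :=
    Subgroup.map_comap_eq_self hle
  have e1 : commutator (Gk k) ≃* commutator (Hk k) :=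
    (e.subgroupMap (commutator (Gk k))).trans (MulEquiv.subgroupCongr hmap)
  have e2 : P ≃* commutator (Hk k) :=
    (Subgroup.equivMapOfInjective P (inl : Nk k →* Hk k) inl_injective).trans
      (MulEquiv.subgroupCongr hPmap)
  haveI : IsFreeGroup P := inferInstance
  exact IsFreeGroup.ofMulEquiv (e2.trans e1.symm)

end SurfaceFree

/-- The commutator subgroup of the genus-`g` surface group is a free group. -/
theorem commutator_subgroup_of_surface_group_is_free (g : ℕ) (hg : 2 ≤ g) :
    IsFreeGroup (commutator (SurfaceGroup g)) := by
  obtain ⟨k, rfl⟩ : ∃ k, g = k + 2 := ⟨g - 2, by omega⟩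
  exact SurfaceFree.main k
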